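/- Let k be a positive integer, n a positive integer with Euclidean division n = qk + r (0 ≤ r < k), and let (u_{i,j})_{(i,j)∈ℕ×ℤ} be a (k,k)-interlaced doubly arithmetic progression over ℤ/mℤ with initial matrix A = (a_{i₀,j₀}), row-differences D₁ = (d¹_{i₀,j₀}) and column-differences D₂ = (d²_{i₀,j₀}). Then the triangle (u_{i,j})_{i+j<n} decomposes as the disjoint union over (i₀,j₀) ∈ {0,...,k-1}² of the subtriangles (u_{i₀+ik, j₀+jk})_{(i,j): i₀+ik+j₀+jk<n}, and each such subtriangle is the arithmetic triangle AT(u_{i₀,j₀}, d¹_{i₀,j₀}, d²_{i₀,j₀}, q+ε) where ε = 1 if i₀+j₀ ≤ r-1, ε = 0 if r ≤ i₀+j₀ ≤ k+r-1, and ε = -1 if i₀+j₀ ≥ k+r. -/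
import Mathlib

private lemma key_ineq (k q r s t : ℕ) (hk : 0 < k) (hr : r < k) (hs : s < 2 * k) :
    s + t * k < q * k + r ↔
      (t : ℤ) < (q : ℤ) + (if s < r then 1 else if s < k + r then 0 else -1) := by
  split_ifs with h1 h2
  · constructor
    · intro h
      have : t ≤ q := by
        by_contra hc
        have : q + 1 ≤ t := by omega
        have hmul : (q + 1) * k ≤ t * k := Nat.mul_le_mul_right k this
        have : q * k + k ≤ t * k := by nlinarith
        omega
      push_cast; omega
    · intro h
      have ht : t ≤ q := by omega
      have hmul : t * k ≤ q * k := Nat.mul_le_mul_right k ht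
      omega
  · constructor
    · intro h
      have : t < q := by
        by_contra hc
        have : q ≤ t := by omega
        have hmul : q * k ≤ t * k := Nat.mul_le_mul_right k this
        omega
      push_cast; omega
    · intro h
      have ht : t + 1 ≤ q := by omega
      have hmul : (t + 1) * k ≤ q * k := Nat.mul_le_mul_right k ht
      have : t * k + k ≤ q * k := by nlinarith
      omega
  · constructor
    · intro h
      have : t + 1 < q := by
        by_contra hc
        have : q ≤ t + 1 := by omega
        have hmul : q * k ≤ (t + 1) * k := Nat.mul_le_mul_right k this
        have : q * k ≤ t * k + k := by nlinarith
        omega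
      push_cast; omega
    · intro h
      have ht : t + 2 ≤ q := by omega
      have hmul : (t + 2) * k ≤ q * k := Nat.mul_le_mul_right k ht
      have : t * k + 2 * k ≤ q * k := by nlinarith
      omega

/-- Decomposition of a triangle of size `n = qk + r` appearing in a
`(k,k)`-interlaced doubly arithmetic progression into `k²` arithmetic
subtriangles of sizes `q + ε` with `ε ∈ {1,0,-1}`. -/
theorem idap_triangle_decomposition (m k : ℕ) (hm : 0 < m) (hk : 0 < k)
    (n q r : ℕ) (hn : 0 < n) (hnqr : n = q * k + r) (hr : r < k)
    (u : ℕ → ℤ → ZMod m) (A D₁ D₂ : ℕ → ℕ → ZMod m)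
    (hIDAP : ∀ i₀ < k, ∀ j₀ < k, ∀ (i : ℕ) (j : ℤ),
      u (i₀ + i * k) ((j₀ : ℤ) + j * k) =
        A i₀ j₀ + (i : ZMod m) * D₂ i₀ j₀ + (j : ZMod m) * D₁ i₀ j₀) :
    -- the triangle `{(a,b) : a + b < n}` is the disjoint union of the `k²` pieces
    (∀ a b : ℕ, a + b < n →
      ∃! x : ℕ × ℕ × ℕ × ℕ,
        x.1 < k ∧ x.2.1 < k ∧ a = x.1 + x.2.2.1 * k ∧ b = x.2.1 + x.2.2.2 * k) ∧
    -- each piece is the arithmetic triangle `AT(A i₀ j₀, D₁ i₀ j₀, D₂ i₀ j₀, q + ε)`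
    (∀ i₀ < k, ∀ j₀ < k, ∀ i j : ℕ,
      ((i₀ + i * k) + (j₀ + j * k) < n ↔
        (i : ℤ) + (j : ℤ) <
          (q : ℤ) + (if i₀ + j₀ < r then 1 else if i₀ + j₀ < k + r then 0 else -1)) ∧
      ((i : ℤ) + (j : ℤ) <
          (q : ℤ) + (if i₀ + j₀ < r then 1 else if i₀ + j₀ < k + r then 0 else -1) →
        u (i₀ + i * k) ((j₀ : ℤ) + (j : ℤ) * k) =
          A i₀ j₀ + (i : ZMod m) * D₂ i₀ j₀ + (j : ZMod m) * D₁ i₀ j₀)) := by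
  constructor
  · intro a b _
    refine ⟨(a % k, b % k, a / k, b / k),
      ⟨Nat.mod_lt _ hk, Nat.mod_lt _ hk, (Nat.mod_add_div' a k).symm,
        (Nat.mod_add_div' b k).symm⟩, ?_⟩
    rintro ⟨y1, y2, y3, y4⟩ ⟨hy1, hy2, ha, hb⟩
    have h1 : a % k = y1 := by
      rw [ha, Nat.add_mul_mod_self_right, Nat.mod_eq_of_lt hy1]
    have h2 : b % k = y2 := by
      rw [hb, Nat.add_mul_mod_self_right, Nat.mod_eq_of_lt hy2]
    have h3 : a / k = y3 := by
      rw [ha, Nat.add_mul_div_right _ _ hk, Nat.div_eq_of_lt hy1, zero_add]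
    have h4 : b / k = y4 := by
      rw [hb, Nat.add_mul_div_right _ _ hk, Nat.div_eq_of_lt hy2, zero_add]
    simp [h1, h2, h3, h4]
  · intro i₀ hi₀ j₀ hj₀ i j
    constructor
    · have := key_ineq k q r (i₀ + j₀) (i + j) hk hr (by omega)
      rw [hnqr]
      have hd : (i + j) * k = i * k + j * k := add_mul i j k
      constructor
      · intro h
        have : (↑(i + j) : ℤ) < (q : ℤ) +
            (if i₀ + j₀ < r then 1 else if i₀ + j₀ < k + r then 0 else -1) :=
          this.mp (by omega)
        push_cast at this; omega
      · intro h
        have : (i₀ + j₀) + (i + j) * k < q * k + r := this.mpr (by push_cast; omega)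
        omega
    · intro _
      have := hIDAP i₀ hi₀ j₀ hj₀ i (j : ℤ)
      simpa using this
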